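/- For every natural number M ≥ 1 and every real α with 0 ≤ α ≤ (M−1)/e, it holds that ∑_{i=0}^{M−1} α^i/i! > α^M/(M−1)!. Consequently the derivative Φ'(α) = e^{−α}(∑_{i=0}^{M−1} α^i/i! − α^M/(M−1)!) of Φ(α) := e^{−α}∑_{i=1}^{M} α^i/(i−1)! is strictly positive on [0, (M−1)/e], so Φ is strictly increasing there. -/

import Mathlib

/-- `Φ(α) = e^{-α} ∑_{x=1}^{M} α^x/(x-1)!`, the expected per-slot throughput of
frame slotted Aloha with multipacket reception capacity `M`. -/
noncomputable def Phi (M : ℕ) (α : ℝ) : ℝ :=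
  Real.exp (-α) * ∑ x ∈ Finset.Icc 1 M, α ^ x / (Nat.factorial (x - 1) : ℝ)

lemma phi_key_identity (M : ℕ) (hM : 1 ≤ M) (α : ℝ) :
    (∑ x ∈ Finset.Icc 1 M, (x : ℝ) * α ^ (x - 1) / (Nat.factorial (x - 1) : ℝ))
      - ∑ x ∈ Finset.Icc 1 M, α ^ x / (Nat.factorial (x - 1) : ℝ)
    = ∑ i ∈ Finset.range M, α ^ i / (Nat.factorial i : ℝ)
        - α ^ M / (Nat.factorial (M - 1) : ℝ) := by
  induction M, hM using Nat.le_induction with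
  | base => simp [Nat.factorial]
  | succ n hn ih =>
    rw [Finset.sum_Icc_succ_top (by omega), Finset.sum_Icc_succ_top (by omega),
      Finset.sum_range_succ]
    have h1 : n + 1 - 1 = n := by omega
    rw [h1]
    have h2 : (n + 1 : ℝ) = n + 1 := by push_cast; ring
    have h3 : (Nat.factorial n : ℝ) = n * Nat.factorial (n - 1) := by
      obtain ⟨m, rfl⟩ := Nat.exists_eq_add_of_le hn
      simp [Nat.add_comm, Nat.factorial_succ]
    have hfn : (Nat.factorial n : ℝ) ≠ 0 := Nat.cast_ne_zero.mpr (Nat.factorial_ne_zero n)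
    have hfn1 : (Nat.factorial (n - 1) : ℝ) ≠ 0 := Nat.cast_ne_zero.mpr (Nat.factorial_ne_zero _)
    have hn' : (n : ℝ) ≠ 0 := by
      have : 0 < n := hn
      positivity
    field_simp at ih ⊢
    rw [h3] at *
    ring_nf
    ring_nf at ih
    push_cast at *
    linear_combination (n : ℝ) * ih

lemma phi_hasDerivAt (M : ℕ) (hM : 1 ≤ M) (α : ℝ) :
    HasDerivAt (Phi M)
      (Real.exp (-α) * (∑ i ∈ Finset.range M, α ^ i / (Nat.factorial i : ℝ)
        - α ^ M / (Nat.factorial (M - 1) : ℝ))) α := by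
  have hsum : HasDerivAt (fun a : ℝ => ∑ x ∈ Finset.Icc 1 M, a ^ x / (Nat.factorial (x - 1) : ℝ))
      (∑ x ∈ Finset.Icc 1 M, (x : ℝ) * α ^ (x - 1) / (Nat.factorial (x - 1) : ℝ)) α := by
    refine HasDerivAt.fun_sum fun x _ => ?_
    simpa [mul_comm] using (hasDerivAt_pow x α).div_const (Nat.factorial (x - 1) : ℝ)
  have hexp : HasDerivAt (fun a : ℝ => Real.exp (-a)) (-Real.exp (-α)) α := by
    simpa using (hasDerivAt_neg α).exp
  have := hexp.mul hsum
  unfold Phi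
  refine this.congr_deriv ?_
  rw [← phi_key_identity M hM α]
  ring

lemma phi_ineq (M : ℕ) (hM : 1 ≤ M) (α : ℝ) (h0 : 0 ≤ α)
    (h1 : α ≤ ((M : ℝ) - 1) / Real.exp 1) :
    α ^ M / (Nat.factorial (M - 1) : ℝ)
      < ∑ i ∈ Finset.range M, α ^ i / (Nat.factorial i : ℝ) := by
  rcases eq_or_lt_of_le hM with h | h
  · -- M = 1
    have hM1 : M = 1 := h.symm
    subst hM1
    have : α ≤ 0 := by
      have := h1
      simpa using this
    have hα : α = 0 := le_antisymm this h0
    subst hα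
    simp [Nat.factorial]
  · -- M ≥ 2
    have hM2 : 2 ≤ M := h
    have hfn1 : (0:ℝ) < (Nat.factorial (M - 1) : ℝ) := by positivity
    -- α^M/(M-1)! ≤ α
    have key : α ^ M / (Nat.factorial (M - 1) : ℝ) ≤ α := by
      have hb : (0:ℝ) ≤ ((M : ℝ) - 1) / Real.exp 1 := le_trans h0 h1
      have hMR : (0:ℝ) ≤ (M : ℝ) - 1 := by
        have : (1:ℝ) ≤ (M:ℝ) := by exact_mod_cast hM
        linarith
      have hfact : ((M : ℝ) - 1) ^ (M - 1) / (Nat.factorial (M - 1) : ℝ)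
          ≤ Real.exp ((M : ℝ) - 1) :=
        Real.pow_div_factorial_le_exp ((M : ℝ) - 1) hMR (M - 1)
      have he : Real.exp 1 ^ (M - 1) = Real.exp ((M : ℝ) - 1) := by
        rw [← Real.exp_nat_mul]
        congr 1
        push_cast [Nat.cast_sub hM]
        ring
      -- so ((M-1)/e)^(M-1) ≤ (M-1)!
      have hpow : (((M : ℝ) - 1) / Real.exp 1) ^ (M - 1) ≤ (Nat.factorial (M - 1) : ℝ) := by
        rw [div_pow, he, div_le_iff₀ (Real.exp_pos _)]
        rw [div_le_iff₀ hfn1] at hfact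
        nlinarith [hfact]
      have hαpow : α ^ (M - 1) ≤ (((M : ℝ) - 1) / Real.exp 1) ^ (M - 1) :=
        pow_le_pow_left₀ h0 h1 _
      have hαM : α ^ M = α * α ^ (M - 1) := by
        conv_lhs => rw [show M = 1 + (M - 1) by omega]
        rw [pow_add, pow_one]
      rw [hαM, div_le_iff₀ hfn1]
      calc α * α ^ (M - 1) ≤ α * (Nat.factorial (M - 1) : ℝ) := by
            apply mul_le_mul_of_nonneg_left _ h0
            exact le_trans hαpow hpow
        _ = α * (Nat.factorial (M - 1) : ℝ) := rfl
    -- sum ≥ 1 + α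
    have hsum : 1 + α ≤ ∑ i ∈ Finset.range M, α ^ i / (Nat.factorial i : ℝ) := by
      have hsub : Finset.range 2 ⊆ Finset.range M := Finset.range_subset_range.mpr hM2
      have := Finset.sum_le_sum_of_subset_of_nonneg hsub
        (fun i _ _ => by positivity : ∀ i ∈ Finset.range M, i ∉ Finset.range 2 →
          (0:ℝ) ≤ α ^ i / (Nat.factorial i : ℝ))
      calc 1 + α = ∑ i ∈ Finset.range 2, α ^ i / (Nat.factorial i : ℝ) := by
            simp [Finset.sum_range_succ, Nat.factorial]
        _ ≤ _ := this
    linarith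

/-- for `M ≥ 1` and `0 ≤ α ≤ (M-1)/e`,
`∑_{i=0}^{M-1} α^i/i! > α^M/(M-1)!`; consequently the derivative
`Φ'(α) = e^{-α}(∑_{i=0}^{M-1} α^i/i! - α^M/(M-1)!)` of `Φ` is strictly positive on
`[0, (M-1)/e]`, so `Φ` is strictly increasing there. -/
theorem phi_strictMono_left (M : ℕ) (hM : 1 ≤ M) :
    (∀ α : ℝ, 0 ≤ α → α ≤ ((M : ℝ) - 1) / Real.exp 1 →
        α ^ M / (Nat.factorial (M - 1) : ℝ)
          < ∑ i ∈ Finset.range M, α ^ i / (Nat.factorial i : ℝ)) ∧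
    (∀ α : ℝ, 0 ≤ α → α ≤ ((M : ℝ) - 1) / Real.exp 1 →
        HasDerivAt (Phi M)
          (Real.exp (-α) * (∑ i ∈ Finset.range M, α ^ i / (Nat.factorial i : ℝ)
            - α ^ M / (Nat.factorial (M - 1) : ℝ))) α) ∧
    (∀ α : ℝ, 0 ≤ α → α ≤ ((M : ℝ) - 1) / Real.exp 1 →
        0 < Real.exp (-α) * (∑ i ∈ Finset.range M, α ^ i / (Nat.factorial i : ℝ)
          - α ^ M / (Nat.factorial (M - 1) : ℝ))) ∧
    StrictMonoOn (Phi M) (Set.Icc 0 (((M : ℝ) - 1) / Real.exp 1)) := by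
  refine ⟨fun α h0 h1 => phi_ineq M hM α h0 h1,
    fun α _ _ => phi_hasDerivAt M hM α,
    fun α h0 h1 => mul_pos (Real.exp_pos _) (by linarith [phi_ineq M hM α h0 h1]), ?_⟩
  apply strictMonoOn_of_deriv_pos (convex_Icc _ _)
  · exact fun x _ => ((phi_hasDerivAt M hM x).continuousAt).continuousWithinAt
  · intro x hx
    rw [interior_Icc, Set.mem_Ioo] at hx
    rw [(phi_hasDerivAt M hM x).deriv]
    exact mul_pos (Real.exp_pos _)
      (by linarith [phi_ineq M hM x hx.1.le hx.2.le])
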